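/- Let σ₁ = diag(1, 1, ω), σ₃ = diag(1, ω, 1), and σ₂ be the 3×3 matrix with diagonal entries 1/2 + (√3/6)i and off-diagonal entries −1/2 + (√3/6)i, and set p = σ₁σ₂σ₁ and q = σ₃σ₂σ₃. Then p² = −[[0,1,0],[1,0,0],[0,0,1]] and q² = −[[0,0,1],[0,1,0],[1,0,0]]. -/
import Mathlib


open Matrix Complex

noncomputable section

/-- ω = e^{2πi/3}, a primitive third root of unity. -/
def ω : ℂ := Complex.exp (2 * Real.pi * Complex.I / 3)

lemma omega_eq : ω = -(1/2 : ℂ) + (Real.sqrt 3 / 2 : ℝ) * Complex.I := by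
  have h : (2 * Real.pi * Complex.I / 3) = ((2 * Real.pi / 3 : ℝ) : ℂ) * Complex.I := by
    push_cast; ring
  rw [ω, h, Complex.exp_mul_I]
  rw [← Complex.ofReal_cos, ← Complex.ofReal_sin]
  have hc : Real.cos (2 * Real.pi / 3) = -(1/2) := by
    have := Real.cos_pi_div_three
    have h2 : 2 * Real.pi / 3 = Real.pi - Real.pi / 3 := by ring
    rw [h2, Real.cos_pi_sub, this]
  have hs : Real.sin (2 * Real.pi / 3) = Real.sqrt 3 / 2 := by
    have := Real.sin_pi_div_three
    have h2 : 2 * Real.pi / 3 = Real.pi - Real.pi / 3 := by ring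
    rw [h2, Real.sin_pi_sub, this]
  rw [hc, hs]
  push_cast; ring

/-- The braiding gate σ₁ of the qutrit W-model. -/
def m1 : Matrix (Fin 3) (Fin 3) ℂ := diagonal ![1, 1, ω]

/-- The braiding gate σ₃ of the qutrit W-model. -/
def m3 : Matrix (Fin 3) (Fin 3) ℂ := diagonal ![1, ω, 1]

/-- The braiding gate σ₂ of the qutrit W-model:
diagonal entries 1/2 + (√3/6)i, off-diagonal entries −1/2 + (√3/6)i. -/
def m2 : Matrix (Fin 3) (Fin 3) ℂ :=
  Matrix.of fun i j =>
    if i = j then (1 / 2 : ℂ) + (Real.sqrt 3 / 6 : ℝ) * Complex.I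
    else -(1 / 2 : ℂ) + (Real.sqrt 3 / 6 : ℝ) * Complex.I

set_option maxHeartbeats 2000000 in
/-- With p = σ₁σ₂σ₁ and q = σ₃σ₂σ₃, we have
p² = −[[0,1,0],[1,0,0],[0,0,1]] and q² = −[[0,0,1],[0,1,0],[1,0,0]]. -/
theorem stmt3 (p q : Matrix (Fin 3) (Fin 3) ℂ)
    (hp : p = m1 * m2 * m1) (hq : q = m3 * m2 * m3) :
    p ^ 2 = -(!![0, 1, 0; 1, 0, 0; 0, 0, 1] : Matrix (Fin 3) (Fin 3) ℂ) ∧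
    q ^ 2 = -(!![0, 0, 1; 0, 1, 0; 1, 0, 0] : Matrix (Fin 3) (Fin 3) ℂ) := by
  subst hp hq
  have hs : ((Real.sqrt 3 : ℝ) : ℂ) ^ 2 = 3 := by
    rw [← Complex.ofReal_pow, Real.sq_sqrt (by norm_num : (3:ℝ) ≥ 0)]
    norm_num
  have h3 : ((Real.sqrt 3 : ℝ) : ℂ) ^ 3 = 3 * (Real.sqrt 3 : ℝ) := by
    rw [pow_succ, hs]
  have h4 : ((Real.sqrt 3 : ℝ) : ℂ) ^ 4 = 9 := by
    rw [pow_succ, h3]; rw [show ((9:ℂ)) = 3 * 3 by norm_num, ← hs]; ring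
  have h5 : ((Real.sqrt 3 : ℝ) : ℂ) ^ 5 = 9 * (Real.sqrt 3 : ℝ) := by
    rw [pow_succ, h4]
  have h6 : ((Real.sqrt 3 : ℝ) : ℂ) ^ 6 = 27 := by
    rw [pow_succ, h5, mul_assoc]; rw [show ((Real.sqrt 3:ℝ):ℂ) * (Real.sqrt 3:ℝ) = ((Real.sqrt 3:ℝ):ℂ)^2 by ring, hs]; norm_num
  have i3 : Complex.I ^ 3 = -Complex.I := by
    rw [pow_succ, Complex.I_sq]; ring
  have i4 : Complex.I ^ 4 = 1 := by
    rw [pow_succ, i3, neg_mul, Complex.I_mul_I]; ring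
  have i5 : Complex.I ^ 5 = Complex.I := by rw [pow_succ, i4, one_mul]
  have i6 : Complex.I ^ 6 = -1 := by rw [pow_succ, i5, Complex.I_mul_I]
  constructor <;>
  · ext i j
    fin_cases i <;> fin_cases j <;>
    · simp [pow_two, Matrix.mul_apply, Fin.sum_univ_three, m1, m2, m3, omega_eq,
        Matrix.diagonal]
      ring_nf
      simp only [hs, h3, h4, h5, h6, i3, i4, i5, i6, Complex.I_sq,
        Matrix.vecHead, Matrix.vecTail, Function.comp]
      ring
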